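/- arXiv:2107.05692 — 2 statements merged into one kernel-verified Lean document; each statement's English description precedes it below -/
import Mathlib

section
/- Let n be even and positive, let A be a submodule of V with finrank A = n/2, and let r : V⧸A → V and r' : V⧸A^⊥ → V be sections of the quotient maps. Then, as functions on V × V, ∑_{(c,c') ∈ (V⧸A) × (V⧸A^⊥)} |A_{r(c),r'(c')}⟩(x) · |A_{r(c),r'(c')}⟩(y) equals the indicator of x = y; equivalently, ∑_{(c,c')} |A_{r(c),r'(c')}⟩ ⊗ |A_{r(c),r'(c')}⟩ = ∑_{v ∈ V} e_v ⊗ e_v. In particular this sum is independent of A and is (an unnormalized) EPR state. -/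
open scoped BigOperators Kronecker Classical ComplexOrder

noncomputable section

/-- The vector space `F₂ⁿ`. -/
abbrev V (n : ℕ) : Type := Fin n → ZMod 2

/-- The standard bilinear pairing `⟨x,y⟩ = ∑ i, xᵢ * yᵢ` on `F₂ⁿ`. -/
def pairing {n : ℕ} (x y : V n) : ZMod 2 := ∑ i, x i * y i

/-- `(−1)^b ∈ ℂ` for `b : ZMod 2`. -/
def sign (b : ZMod 2) : ℂ := if b = 0 then 1 else -1

lemma pairing_add_right {n : ℕ} (x y z : V n) :
    pairing x (y + z) = pairing x y + pairing x z := by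
  simp [pairing, mul_add, Finset.sum_add_distrib]

lemma pairing_smul_right {n : ℕ} (c : ZMod 2) (x y : V n) :
    pairing x (c • y) = c * pairing x y := by
  simp only [pairing, Pi.smul_apply, smul_eq_mul, Finset.mul_sum]
  exact Finset.sum_congr rfl fun i _ => by ring

/-- The orthogonal complement `A^⊥ = {y | ∀ a ∈ A, ⟨a,y⟩ = 0}`. -/
def perp {n : ℕ} (A : Submodule (ZMod 2) (V n)) : Submodule (ZMod 2) (V n) where
  carrier := {y | ∀ a ∈ A, pairing a y = 0}
  zero_mem' := by
    simp only [Set.mem_setOf_eq]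
    intro a _
    simp [pairing]
  add_mem' := by
    intro y z hy hz
    simp only [Set.mem_setOf_eq] at *
    intro a ha
    rw [pairing_add_right, hy a ha, hz a ha, add_zero]
  smul_mem' := by
    intro c y hy
    simp only [Set.mem_setOf_eq] at *
    intro a ha
    rw [pairing_smul_right, hy a ha, mul_zero]

/-- The coset `A + s = {a + s : a ∈ A}`. -/
def coset {n : ℕ} (A : Submodule (ZMod 2) (V n)) (s : V n) : Set (V n) :=
  {v | ∃ a ∈ A, v = a + s}

noncomputable instance {n : ℕ} (A : Submodule (ZMod 2) (V n)) : Fintype A :=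
  Fintype.ofFinite _

/-- The coset state `|A_{s,s'}⟩ = |A|^{−1/2} ∑_{a ∈ A} (−1)^{⟨a,s'⟩} e_{a+s}`. -/
noncomputable def cosetState {n : ℕ} (A : Submodule (ZMod 2) (V n)) (s s' : V n) :
    EuclideanSpace ℂ (V n) :=
  ((Real.sqrt (Nat.card A) : ℂ))⁻¹ •
    ∑ a : A, sign (pairing (a : V n) s') • EuclideanSpace.single ((a : V n) + s) (1 : ℂ)

/-- A family of orthogonal projections: each member is Hermitian and idempotent. -/
def IsProjFamily {ι m : Type*} [Fintype m] (P : ι → Matrix m m ℂ) : Prop :=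
  ∀ p, (P p).IsHermitian ∧ P p * P p = P p

/-- Coset invariance of a family indexed by pairs `(s, s')`:
the value depends only on the pair of cosets `(A + s, A^⊥ + s')`. -/
def CosetInvariant {n : ℕ} {α : Type*} (A : Submodule (ZMod 2) (V n))
    (F : V n × V n → α) : Prop :=
  ∀ s₁ s₁' s₂ s₂' : V n, coset A s₁ = coset A s₂ →
    coset (perp A) s₁' = coset (perp A) s₂' → F (s₁, s₁') = F (s₂, s₂')

/-- The rank-one matrix `|A_{s,s'}⟩⟨A_{s,s'}|`. -/
noncomputable def outer {n : ℕ} (A : Submodule (ZMod 2) (V n)) (s s' : V n) :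
    Matrix (V n) (V n) ℂ :=
  Matrix.of fun x y => cosetState A s s' x * (starRingEnd ℂ) (cosetState A s s' y)

/-- `Π^A[P,Q] = 2^{−n} ∑_{s,s'} |A_{s,s'}⟩⟨A_{s,s'}| ⊗ P(s,s') ⊗ Q(s,s')`. -/
noncomputable def PiMat {n : ℕ} {I J : Type*} [Fintype I] [Fintype J]
    (A : Submodule (ZMod 2) (V n)) (P : V n × V n → Matrix I I ℂ)
    (Q : V n × V n → Matrix J J ℂ) : Matrix (V n × I × J) (V n × I × J) ℂ :=
  ((2 : ℂ) ^ n)⁻¹ • ∑ s : V n, ∑ s' : V n, (outer A s s') ⊗ₖ (P (s, s') ⊗ₖ Q (s, s'))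

/-- The `ℓ² → ℓ²` operator norm of a complex square matrix. -/
noncomputable def opNorm {m : Type*} [Fintype m] [DecidableEq m] (M : Matrix m m ℂ) : ℝ :=
  ‖Matrix.toEuclideanCLM (𝕜 := ℂ) M‖

noncomputable instance {n : ℕ} (A : Submodule (ZMod 2) (V n)) : Fintype (V n ⧸ A) :=
  @Fintype.ofFinite _ (Finite.of_surjective (Submodule.Quotient.mk (p := A))
    (Submodule.Quotient.mk_surjective A))


/- ### Auxiliary lemmas -/

lemma z2cases : ∀ b : ZMod 2, b = 0 ∨ b = 1 := by decide

lemma one_add_one_z2 : (1 : ZMod 2) + 1 = 0 := by decide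

lemma sign_zero' : sign 0 = 1 := by simp [sign]

lemma sign_add_one (b : ZMod 2) : sign (b + 1) = - sign b := by
  rcases z2cases b with h | h <;> subst h <;> simp [sign, one_add_one_z2]

lemma sign_mul_sign (a b : ZMod 2) : sign a * sign b = sign (a + b) := by
  rcases z2cases a with h | h <;> rcases z2cases b with h' | h' <;> subst h <;> subst h' <;>
    simp [sign, one_add_one_z2]

lemma vadd_self {n : ℕ} (v : V n) : v + v = 0 := by
  funext i
  have : ∀ b : ZMod 2, b + b = 0 := by decide
  exact this (v i)

lemma sub_eq_addV {n : ℕ} (u v : V n) : u - v = u + v := by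
  funext i
  have : ∀ a b : ZMod 2, a - b = a + b := by decide
  exact this (u i) (v i)

lemma add_add_addV {n : ℕ} (u v w : V n) : (u + v) + (u + w) = v + w := by
  funext i
  have : ∀ a b c : ZMod 2, (a + b) + (a + c) = b + c := by decide
  exact this (u i) (v i) (w i)

lemma eq_of_addV_eq_zero {n : ℕ} {u v : V n} (h : u + v = 0) : u = v := by
  funext i
  have h2 : ∀ a b : ZMod 2, a + b = 0 → a = b := by decide
  exact h2 (u i) (v i) (congrFun h i)

lemma pairing_add_left {n : ℕ} (x y z : V n) :
    pairing (x + y) z = pairing x z + pairing y z := by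
  simp [pairing, add_mul, Finset.sum_add_distrib]

lemma pairing_zero_left {n : ℕ} (z : V n) : pairing 0 z = 0 := by simp [pairing]

lemma pairing_single {n : ℕ} (w : V n) (i : Fin n) :
    pairing w (Pi.single i 1) = w i := by
  simp only [pairing, Pi.single_apply, mul_ite, mul_one, mul_zero]
  rw [Finset.sum_ite_eq' Finset.univ i w]
  simp

lemma mem_perp_iff {n : ℕ} (A : Submodule (ZMod 2) (V n)) (y : V n) :
    y ∈ perp A ↔ ∀ a ∈ A, pairing a y = 0 := Iff.rfl

/-- If `f : G → ZMod 2` flips by `1` under translation by `t`, the sign-sum vanishes. -/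
lemma sum_sign_zero {G : Type*} [Fintype G] [AddGroup G] (f : G → ZMod 2) (t : G)
    (ht : ∀ g, f (g + t) = f g + 1) : ∑ g, sign (f g) = 0 := by
  have h1 : ∑ g, sign (f g) = -∑ g, sign (f g) := by
    calc ∑ g, sign (f g)
        = ∑ g, sign (f (g + t)) :=
          (Fintype.sum_equiv (Equiv.addRight t) (fun g => sign (f (g + t)))
            (fun g => sign (f g)) (fun g => rfl)).symm
      _ = ∑ g, -sign (f g) := by
          refine Finset.sum_congr rfl fun g _ => ?_
          rw [ht g, sign_add_one]
      _ = -∑ g, sign (f g) := by rw [Finset.sum_neg_distrib]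
  linear_combination h1 / 2

lemma cosetState_apply {n : ℕ} (A : Submodule (ZMod 2) (V n)) (s s' x : V n) :
    cosetState A s s' x = ((Real.sqrt (Nat.card A) : ℂ))⁻¹ *
      (if x + s ∈ A then sign (pairing (x + s) s') else 0) := by
  classical
  rw [cosetState, PiLp.smul_apply, WithLp.ofLp_sum, Finset.sum_apply, smul_eq_mul]
  congr 1
  have step : ∀ a : A,
      (sign (pairing (a : V n) s') • EuclideanSpace.single ((a : V n) + s) (1 : ℂ)) x
        = if a = x + s then sign (pairing (x + s) s') else 0 := by
    intro a
    rw [PiLp.smul_apply, EuclideanSpace.single_apply, smul_eq_mul]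
    by_cases h : (a : V n) = x + s
    · have hx : x = (a : V n) + s := by
        rw [h, add_assoc, vadd_self, add_zero]
      rw [if_pos hx, if_pos h, h, mul_one]
    · have hx : ¬ x = (a : V n) + s := by
        intro hx
        exact h (by rw [hx, add_assoc, vadd_self, add_zero])
      rw [if_neg hx, if_neg h, mul_zero]
  rw [Finset.sum_congr rfl fun a _ => step a]
  by_cases hm : x + s ∈ A
  · rw [if_pos hm]
    have : ∀ a : A, ((a : V n) = x + s) ↔ (a = (⟨x + s, hm⟩ : A)) := fun a => by
      simp [Subtype.ext_iff]
    simp only [this]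
    rw [Finset.sum_ite_eq' Finset.univ (⟨x + s, hm⟩ : A)
      (fun _ => sign (pairing (x + s) s'))]
    simp
  · rw [if_neg hm]
    refine Finset.sum_eq_zero fun a _ => ?_
    rw [if_neg]
    intro h
    exact hm (h ▸ a.2)

lemma card_mul_card_perp {n : ℕ} (A : Submodule (ZMod 2) (V n)) :
    (Nat.card A : ℂ) * (Nat.card (perp A) : ℂ) = 2 ^ n := by
  classical
  have hL : ∀ s' : V n, (∑ a : A, sign (pairing (a : V n) s'))
      = if s' ∈ perp A then (Nat.card A : ℂ) else 0 := by
    intro s'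
    by_cases hp : s' ∈ perp A
    · rw [if_pos hp]
      rw [Finset.sum_congr rfl fun a _ => by
        rw [(mem_perp_iff A s').mp hp (a : V n) a.2, sign_zero']]
      simp [Nat.card_eq_fintype_card]
    · rw [if_neg hp]
      rw [mem_perp_iff] at hp
      push_neg at hp
      obtain ⟨a₀, ha₀, hpa⟩ := hp
      have h1 : pairing a₀ s' = 1 := by
        rcases z2cases (pairing a₀ s') with h | h
        · exact absurd h hpa
        · exact h
      refine sum_sign_zero (fun a : A => pairing (a : V n) s') ⟨a₀, ha₀⟩ fun g => ?_
      show pairing ((g : V n) + a₀) s' = _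
      rw [pairing_add_left, h1]
  have hR : ∀ a : A, (∑ s' : V n, sign (pairing (a : V n) s'))
      = if a = 0 then ((2 : ℂ)) ^ n else 0 := by
    intro a
    by_cases h0 : a = 0
    · subst h0
      rw [if_pos rfl]
      simp [pairing_zero_left, sign_zero', Finset.card_univ]
    · rw [if_neg h0]
      have hv : (a : V n) ≠ 0 := by
        simpa [Submodule.coe_eq_zero] using h0
      obtain ⟨i, hi⟩ : ∃ i, (a : V n) i ≠ 0 := by
        by_contra hcon
        push_neg at hcon
        exact hv (funext fun i => hcon i)
      refine sum_sign_zero (fun s' => pairing (a : V n) s') (Pi.single i 1) fun g => ?_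
      show pairing (a : V n) (g + Pi.single i 1) = _
      rw [pairing_add_right, pairing_single]
      rcases z2cases ((a : V n) i) with h | h
      · exact absurd h hi
      · rw [h]
  have hcomm : ∑ s' : V n, ∑ a : A, sign (pairing (a : V n) s')
      = ∑ a : A, ∑ s' : V n, sign (pairing (a : V n) s') := Finset.sum_comm
  rw [Finset.sum_congr rfl fun s' _ => hL s',
    Finset.sum_congr rfl fun a _ => hR a] at hcomm
  rw [Finset.sum_ite_eq' Finset.univ (0 : A) (fun _ => ((2 : ℂ)) ^ n)] at hcomm
  simp only [Finset.mem_univ, if_true] at hcomm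
  rw [← Finset.sum_filter, Finset.sum_const, nsmul_eq_mul] at hcomm
  have hcard : (Finset.univ.filter (· ∈ perp A)).card = Nat.card (perp A) := by
    rw [@Nat.card_eq_fintype_card _ (Subtype.fintype _), Fintype.card_subtype]
  rw [hcard] at hcomm
  rw [mul_comm]
  exact hcomm

lemma card_quotient_perp {n : ℕ} (A : Submodule (ZMod 2) (V n)) :
    (Nat.card (V n ⧸ perp A) : ℂ) = (Nat.card A : ℂ) := by
  have h1 : Nat.card (V n) = Nat.card (V n ⧸ perp A) * Nat.card (perp A) :=
    AddSubgroup.card_eq_card_quotient_mul_card_addSubgroup (perp A).toAddSubgroup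
  have h2 : Nat.card (V n) = 2 ^ n := by
    simp [Nat.card_eq_fintype_card]
  have h3 : (Nat.card (V n ⧸ perp A) : ℂ) * (Nat.card (perp A) : ℂ) = 2 ^ n := by
    rw [← Nat.cast_mul, ← h1, h2]
    push_cast
    ring
  have h4 := card_mul_card_perp A
  have hne : (Nat.card (perp A) : ℂ) ≠ 0 := Nat.cast_ne_zero.mpr Nat.card_pos.ne'
  exact mul_right_cancel₀ hne (h3.trans h4.symm)

/-- Summing `|A_{r c, r' c'}⟩ ⊗ |A_{r c, r' c'}⟩` over one representative per pair of cosets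
gives the (unnormalized) EPR state `∑ v, e_v ⊗ e_v`, independently of `A`. -/
theorem sum_cosetState_tensor_eq_EPR
    {n : ℕ} (hn : 0 < n) (hne : Even n)
    (A : Submodule (ZMod 2) (V n)) (hA : Module.finrank (ZMod 2) A = n / 2)
    (r : (V n ⧸ A) → V n)
    (hr : ∀ c : V n ⧸ A, (Submodule.Quotient.mk (r c) : V n ⧸ A) = c)
    (r' : (V n ⧸ perp A) → V n)
    (hr' : ∀ c : V n ⧸ perp A, (Submodule.Quotient.mk (r' c) : V n ⧸ perp A) = c)
    (x y : V n) :
    ∑ c : V n ⧸ A, ∑ c' : V n ⧸ perp A,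
        cosetState A (r c) (r' c') x * cosetState A (r c) (r' c') y
      = if x = y then 1 else 0 := by
  classical
  have hNnat : 0 < Nat.card A := Nat.card_pos
  have hNne : (Nat.card A : ℂ) ≠ 0 := by positivity
  have hsq : ((Real.sqrt (Nat.card A) : ℂ))⁻¹ * ((Real.sqrt (Nat.card A) : ℂ))⁻¹
      = ((Nat.card A : ℂ))⁻¹ := by
    rw [← mul_inv, ← Complex.ofReal_mul, Real.mul_self_sqrt (Nat.cast_nonneg _)]
    simp [Complex.ofReal_inv]
  have mem_iff : ∀ (v : V n) (c : V n ⧸ A), (v + r c ∈ A ↔ c = Submodule.Quotient.mk v) := by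
    intro v c
    rw [← sub_eq_addV, ← Submodule.Quotient.eq, hr c]
    exact eq_comm
  have key : ∀ (c : V n ⧸ A) (c' : V n ⧸ perp A),
      cosetState A (r c) (r' c') x * cosetState A (r c) (r' c') y =
        if c = Submodule.Quotient.mk x then
          (if x + y ∈ A then ((Nat.card A : ℂ))⁻¹ * sign (pairing (x + y) (r' c')) else 0)
        else 0 := by
    intro c c'
    rw [cosetState_apply, cosetState_apply]
    by_cases hx : x + r c ∈ A
    · have hc : c = Submodule.Quotient.mk x := (mem_iff x c).mp hx
      rw [if_pos hc]
      by_cases hy : y + r c ∈ A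
      · have hxy : x + y ∈ A := by
          have h := A.add_mem hx hy
          have e : (x + r c) + (y + r c) = x + y := by
            rw [add_comm x (r c), add_comm y (r c), add_add_addV]
          rwa [e] at h
        rw [if_pos hx, if_pos hy, if_pos hxy]
        rw [mul_mul_mul_comm, hsq, sign_mul_sign, ← pairing_add_left]
        congr 2
        rw [add_comm x (r c), add_comm y (r c), add_add_addV]
      · have hxy : x + y ∉ A := by
          intro h
          apply hy
          have h2 := A.add_mem hx h
          have e : (x + r c) + (x + y) = y + r c := by
            rw [add_add_addV, add_comm]
          rwa [e] at h2
        rw [if_pos hx, if_neg hy, if_neg hxy]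
        ring
    · have hc : ¬ c = Submodule.Quotient.mk x := fun h => hx ((mem_iff x c).mpr h)
      rw [if_neg hx, if_neg hc]
      ring
  rw [Finset.sum_congr rfl fun c _ => Finset.sum_congr rfl fun c' _ => key c c']
  have pull : ∀ c : V n ⧸ A,
      (∑ c' : V n ⧸ perp A, if c = Submodule.Quotient.mk x then
          (if x + y ∈ A then ((Nat.card A : ℂ))⁻¹ * sign (pairing (x + y) (r' c')) else 0)
        else 0)
      = if c = Submodule.Quotient.mk x then
          (if x + y ∈ A then
            ((Nat.card A : ℂ))⁻¹ * ∑ c' : V n ⧸ perp A, sign (pairing (x + y) (r' c'))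
          else 0)
        else 0 := by
    intro c
    split_ifs with h1 h2 <;> simp [Finset.mul_sum]
  rw [Finset.sum_congr rfl fun c _ => pull c]
  rw [Finset.sum_ite_eq' Finset.univ (Submodule.Quotient.mk x : V n ⧸ A) _]
  simp only [Finset.mem_univ, if_true]
  by_cases hxy : x = y
  · subst hxy
    rw [if_pos rfl, if_pos (by rw [vadd_self x]; exact A.zero_mem)]
    have : ∀ c' : V n ⧸ perp A, sign (pairing (x + x) (r' c')) = 1 := by
      intro c'
      rw [vadd_self x, pairing_zero_left, sign_zero']
    rw [Finset.sum_congr rfl fun c' _ => this c', Finset.sum_const, Finset.card_univ,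
      nsmul_eq_mul, mul_one, ← Nat.card_eq_fintype_card, card_quotient_perp A]
    exact inv_mul_cancel₀ hNne
  · rw [if_neg hxy]
    by_cases hmem : x + y ∈ A
    · rw [if_pos hmem]
      have hw : x + y ≠ 0 := fun h => hxy (eq_of_addV_eq_zero h)
      obtain ⟨i, hi⟩ : ∃ i, (x + y) i ≠ 0 := by
        by_contra hcon
        push_neg at hcon
        exact hw (funext fun i => hcon i)
      have hone : pairing (x + y) (Pi.single i 1) = 1 := by
        rw [pairing_single]
        rcases z2cases ((x + y) i) with h | h
        · exact absurd h hi
        · exact h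
      have hzero : (∑ c' : V n ⧸ perp A, sign (pairing (x + y) (r' c'))) = 0 := by
        refine sum_sign_zero (fun c' => pairing (x + y) (r' c'))
          (Submodule.Quotient.mk (Pi.single i 1)) fun c' => ?_
        have hd : r' (c' + Submodule.Quotient.mk (Pi.single i 1))
            - (r' c' + Pi.single i 1) ∈ perp A := by
          rw [← Submodule.Quotient.eq, hr', Submodule.Quotient.mk_add, hr']
        have hre : r' (c' + Submodule.Quotient.mk (Pi.single i 1))
            = (r' c' + Pi.single i 1)
              + (r' (c' + Submodule.Quotient.mk (Pi.single i 1))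
                  - (r' c' + Pi.single i 1)) := by abel
        show pairing (x + y) (r' (c' + Submodule.Quotient.mk (Pi.single i 1))) = _
        rw [hre, pairing_add_right, pairing_add_right, hd _ hmem, add_zero, hone]
      rw [hzero, mul_zero]
    · rw [if_neg hmem]
end
end

section
/- Let T : V → V be an invertible linear map and let Tᵀ denote its transpose with respect to the pairing, i.e. the unique linear map satisfying ⟨Tᵀ x, y⟩ = ⟨x, T y⟩ for all x, y ∈ V. Let U_T be the linear map on EuclideanSpace ℂ V that permutes basis vectors by U_T e_x = e_{T x}. Then for every submodule A of V and all s, s' ∈ V: U_T |A_{s,s'}⟩ = |(T(A))_{T s, (T⁻¹)ᵀ s'}⟩, where T(A) is the image submodule of A under T. -/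
open scoped BigOperators Kronecker Classical ComplexOrder

noncomputable section

/-- The unitary permuting basis vectors by an invertible linear map `T`: `U_T e_x = e_{T x}`. -/
noncomputable def Umat {n : ℕ} (T : V n ≃ₗ[ZMod 2] V n) : Matrix (V n) (V n) ℂ :=
  Matrix.of fun x y => if x = T y then 1 else 0

lemma pairing_comm {n : ℕ} (x y : V n) : pairing x y = pairing y x := by
  simp [pairing, mul_comm]

/-- Change of basis of coset states: `U_T |A_{s,s'}⟩ = |(T A)_{T s, (T⁻¹)ᵀ s'}⟩`, where
`(T⁻¹)ᵀ` is the transpose of `T⁻¹` with respect to the pairing. -/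
theorem Umat_mulVec_cosetState
    {n : ℕ} (hn : 0 < n)
    (T : V n ≃ₗ[ZMod 2] V n) (Tit : V n →ₗ[ZMod 2] V n)
    (hTit : ∀ x y : V n, pairing (Tit x) y = pairing x (T.symm y))
    (A : Submodule (ZMod 2) (V n)) (s s' : V n) :
    (Umat T).mulVec (cosetState A s s')
      = (cosetState (A.map (T : V n →ₗ[ZMod 2] V n)) (T s) (Tit s') : EuclideanSpace ℂ (V n)) := by
  have hcard : Nat.card (A.map (T : V n →ₗ[ZMod 2] V n)) = Nat.card A := by
    exact Nat.card_congr (Submodule.equivMapOfInjective _ T.injective A).symm.toEquiv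
  funext x
  have hL : (Umat T).mulVec (cosetState A s s') x = cosetState A s s' (T.symm x) := by
    simp only [Matrix.mulVec, dotProduct, Umat, Matrix.of_apply]
    rw [Finset.sum_eq_single (T.symm x)]
    · simp
    · intro b _ hb
      have : x ≠ T b := fun h => hb (by simp [h])
      simp [this]
    · simp
  rw [hL]
  simp only [cosetState, hcard, PiLp.smul_apply, Finset.sum_apply, smul_eq_mul]
  congr 1
  rw [← (Submodule.equivMapOfInjective (T : V n →ₗ[ZMod 2] V n) T.injective A).toEquiv.sum_comp]
  rw [WithLp.ofLp_sum, WithLp.ofLp_sum, Finset.sum_apply, Finset.sum_apply]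
  apply Finset.sum_congr rfl
  intro a _
  have hco : (((Submodule.equivMapOfInjective (T : V n →ₗ[ZMod 2] V n) T.injective A).toEquiv a :
      A.map (T : V n →ₗ[ZMod 2] V n)) : V n) = T (a : V n) := rfl
  rw [hco]
  have hp : pairing (T (a:V n)) (Tit s') = pairing (a:V n) s' := by
    rw [pairing_comm, hTit, pairing_comm]; simp
  rw [hp]
  simp only [PiLp.smul_apply, smul_eq_mul, EuclideanSpace.single_apply]
  by_cases h : (T.symm x) = (a : V n) + s
  · have : x = T (a:V n) + T s := by
      have := congrArg T h; simpa using this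
    simp [h, this]
  · have : x ≠ T (a:V n) + T s := by
      intro hx; apply h
      have := congrArg T.symm hx; simpa using this
    simp [h, this]
end
end
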